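/- Let X be a random variable with E[|X|] < ∞ and let N be a standard normal random variable independent of X; set Y = X + N. If E[X | Y] is almost surely equal to a constant, then X is almost surely constant. -/

import Mathlib

open MeasureTheory ProbabilityTheory Real Filter
open scoped ENNReal NNReal

lemma aux_abs_le (z : ℝ) : |z| ≤ 2 * rexp (z^2/8) := by
  have h1 : |z| / 2 ≤ 1 + z^2/8 := by
    cases abs_cases z with
    | inl h => nlinarith [h.1, sq_nonneg (z - 2)]
    | inr h => nlinarith [h.1, sq_nonneg (z + 2)]
  have h2 : 1 + z^2/8 ≤ rexp (z^2/8) := by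
    have := Real.add_one_le_exp (z^2/8); linarith
  linarith

lemma aux_bound (z t : ℝ) : |z * rexp (z*t - z^2/4)| ≤ 2 * rexp (2*t^2) := by
  rw [abs_mul, abs_exp]
  calc |z| * rexp (z*t - z^2/4) ≤ (2 * rexp (z^2/8)) * rexp (z*t - z^2/4) := by
        apply mul_le_mul_of_nonneg_right (aux_abs_le z) (exp_nonneg _)
    _ = 2 * rexp (z^2/8 + (z*t - z^2/4)) := by rw [mul_assoc, ← Real.exp_add]
    _ ≤ 2 * rexp (2*t^2) := by
        have : z^2/8 + (z*t - z^2/4) ≤ 2*t^2 := by nlinarith [sq_nonneg (z - 4*t)]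
        have := Real.exp_le_exp.mpr this
        linarith

lemma aux_gauss_integral (a : ℝ) :
    ∫ n, rexp (-(a - n)^2/2) ∂(gaussianReal 0 1) = rexp (-a^2/4) / Real.sqrt 2 := by
  rw [gaussianReal_of_var_ne_zero 0 one_ne_zero]
  have hd : gaussianPDF 0 1 = fun x => ((gaussianPDFReal 0 1 x).toNNReal : ℝ≥0∞) := rfl
  rw [hd, integral_withDensity_eq_integral_smul
    ((measurable_gaussianPDFReal 0 1).real_toNNReal)]
  have hpt : ∀ x : ℝ, (gaussianPDFReal 0 1 x).toNNReal • rexp (-(a - x)^2/2)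
      = ((Real.sqrt (2*π))⁻¹ * rexp (-a^2/4)) * rexp (-(x - a/2)^2) := by
    intro x
    rw [NNReal.smul_def, Real.coe_toNNReal _ (gaussianPDFReal_nonneg 0 1 x)]
    simp only [gaussianPDFReal, NNReal.coe_one, mul_one, sub_zero, smul_eq_mul]
    rw [mul_assoc, mul_assoc, ← Real.exp_add, ← Real.exp_add]
    congr 1
    ring_nf
  rw [funext hpt, integral_const_mul]
  have h1 : ∫ x : ℝ, rexp (-(x - a/2)^2) = Real.sqrt π := by
    rw [integral_sub_right_eq_self (fun x => rexp (-x^2)) (a/2)]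
    have := integral_gaussian 1
    simp only [neg_mul, one_mul] at this
    rw [this, div_one]
  rw [h1]
  rw [show (2:ℝ)*π = 2*π from rfl, Real.sqrt_mul (by norm_num : (0:ℝ) ≤ 2)]
  have hpi : Real.sqrt π ≠ 0 := by positivity
  have h2 : Real.sqrt 2 ≠ 0 := by positivity
  field_simp

lemma aux_pos {Ω' : Type*} [MeasurableSpace Ω'] (ν : Measure Ω') [IsProbabilityMeasure ν]
    (Z : Ω' → ℝ) (hZ : Measurable Z)
    (h : ∀ t : ℝ, ∫ ω, Z ω * rexp (Z ω * t - Z ω^2/4) ∂ν = 0) :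
    ν {ω | 0 < Z ω} = 0 := by
  by_contra hpos
  -- integrability of the integrand, for every t
  have hint : ∀ t : ℝ, Integrable (fun ω => Z ω * rexp (Z ω * t - Z ω^2/4)) ν := by
    intro t
    refine Integrable.mono' (integrable_const (2 * rexp (2*t^2))) ?_ ?_
    · exact (hZ.mul (((hZ.mul_const t).sub ((hZ.pow_const 2).div_const 4)).exp)).aestronglyMeasurable
    · refine ae_of_all _ fun ω => ?_
      have := aux_bound (Z ω) t
      rw [abs_mul, abs_exp] at this
      simpa using this
  -- find a slab with positive measure
  set S : ℕ → Set Ω' := fun k => {ω | 1/(k+1 : ℝ) ≤ Z ω ∧ Z ω ≤ (k+1 : ℝ)} with hS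
  have hSmeas : ∀ k, MeasurableSet (S k) :=
    fun k => (measurableSet_le measurable_const hZ).inter (measurableSet_le hZ measurable_const)
  have hsub : {ω | 0 < Z ω} ⊆ ⋃ k, S k := by
    intro ω hω
    obtain ⟨n, hn⟩ := exists_nat_ge (max (1 / Z ω) (Z ω))
    have hz : (0:ℝ) < Z ω := hω
    have h1 : 1 / Z ω ≤ (n:ℝ) := le_trans (le_max_left _ _) hn
    have h1' : 1 ≤ (n:ℝ) * Z ω := by rw [div_le_iff₀ hz] at h1; nlinarith
    refine Set.mem_iUnion.2 ⟨n, ?_, ?_⟩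
    · rw [div_le_iff₀ (by positivity : (0:ℝ) < (n:ℝ)+1)]
      nlinarith
    · linarith [le_trans (le_max_right _ _) hn]
  obtain ⟨k, hk⟩ : ∃ k, ν (S k) ≠ 0 := by
    by_contra hall
    push_neg at hall
    exact hpos (measure_mono_null hsub (measure_iUnion_null hall))
  set a : ℝ := 1/(k+1 : ℝ) with ha
  set b : ℝ := (k+1 : ℝ) with hb
  have ha0 : 0 < a := by positivity
  set δ : ℝ := (ν (S k)).toReal with hδ
  have hδ0 : 0 < δ := ENNReal.toReal_pos hk (measure_ne_top ν _)
  have hmemS : ∀ ω ∈ S k, a ≤ Z ω ∧ Z ω ≤ b := fun ω hω => ⟨hω.1, hω.2⟩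
  have hδS : δ = (ν (S k)).toReal := hδ
  have hab : 0 < b := by rw [hb]; positivity
  clear_value a b δ
  -- key bound for t ≥ 0
  have key : ∀ t : ℝ, 0 ≤ t → a * rexp (a*t - b^2/4) * δ ≤ 2 := by
    intro t ht
    set f : Ω' → ℝ := fun ω => Z ω * rexp (Z ω * t - Z ω^2/4) with hf
    have hfint := hint t
    have hPmeas : MeasurableSet {ω | 0 < Z ω} := measurableSet_lt measurable_const hZ
    -- lower bound on the slab
    have h1 : a * rexp (a*t - b^2/4) * δ ≤ ∫ ω in S k, f ω ∂ν := by
      rw [hδS]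
      refine setIntegral_ge_of_const_le_real (hSmeas k) (measure_ne_top ν _) ?_ hfint.integrableOn
      intro ω hω
      · obtain ⟨hZω, hZb⟩ := hmemS ω hω
        have he : rexp (a*t - b^2/4) ≤ rexp (Z ω * t - Z ω^2/4) := by
          apply Real.exp_le_exp.2
          have h2 : a * t ≤ Z ω * t := mul_le_mul_of_nonneg_right hZω ht
          have h3 : Z ω^2 ≤ b^2 := by nlinarith [ha0.trans_le hZω]
          linarith
        calc a * rexp (a*t - b^2/4) ≤ Z ω * rexp (Z ω * t - Z ω^2/4) :=
              mul_le_mul (by linarith) he (exp_nonneg _) (by linarith)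
          _ = f ω := rfl
    -- slab integral ≤ integral over {0 < Z}
    have h2 : ∫ ω in S k, f ω ∂ν ≤ ∫ ω in {ω | 0 < Z ω}, f ω ∂ν := by
      refine setIntegral_mono_set hfint.integrableOn ?_ ?_
      · filter_upwards [ae_restrict_mem hPmeas] with ω hω
        exact mul_nonneg (le_of_lt hω) (exp_nonneg _)
      · refine Filter.Eventually.of_forall fun ω hω => ?_
        exact lt_of_lt_of_le ha0 (hmemS ω hω).1
    -- integral over {0 < Z} = - integral over complement, bounded by 2
    have h3 : ∫ ω in {ω | 0 < Z ω}, f ω ∂ν = - ∫ ω in {ω | 0 < Z ω}ᶜ, f ω ∂ν := by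
      have := integral_add_compl hPmeas hfint
      rw [h t] at this
      linarith [this]
    have h4 : ‖∫ ω in {ω | 0 < Z ω}ᶜ, f ω ∂ν‖ ≤ 2 := by
      have hb2 : ∀ ω ∈ {ω | 0 < Z ω}ᶜ, ‖f ω‖ ≤ 2 := by
        intro ω hω
        have hZω : Z ω ≤ 0 := not_lt.1 hω
        have : |Z ω * rexp (Z ω * t - Z ω^2/4)| ≤ 2 * rexp (Z ω * t - Z ω^2/8) := by
          rw [abs_mul, abs_exp]
          calc |Z ω| * rexp (Z ω*t - Z ω^2/4)
              ≤ (2 * rexp (Z ω^2/8)) * rexp (Z ω*t - Z ω^2/4) :=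
                mul_le_mul_of_nonneg_right (aux_abs_le (Z ω)) (exp_nonneg _)
            _ = 2 * rexp (Z ω^2/8 + (Z ω*t - Z ω^2/4)) := by rw [mul_assoc, ← Real.exp_add]
            _ = 2 * rexp (Z ω * t - Z ω^2/8) := by ring_nf
        have h5 : rexp (Z ω * t - Z ω^2/8) ≤ 1 := by
          rw [Real.exp_le_one_iff]
          nlinarith [mul_nonneg (neg_nonneg.2 hZω) ht, sq_nonneg (Z ω)]
        calc ‖f ω‖ = |Z ω * rexp (Z ω * t - Z ω^2/4)| := rfl
          _ ≤ 2 * rexp (Z ω * t - Z ω^2/8) := this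
          _ ≤ 2 := by linarith
      calc ‖∫ ω in {ω | 0 < Z ω}ᶜ, f ω ∂ν‖
          ≤ 2 * (ν {ω | 0 < Z ω}ᶜ).toReal :=
            norm_setIntegral_le_of_norm_le_const (measure_lt_top ν _) hb2
        _ ≤ 2 * 1 := by
            have h9 : (ν {ω | 0 < Z ω}ᶜ).toReal ≤ 1 := by
              simpa using ENNReal.toReal_mono ENNReal.one_ne_top prob_le_one
            linarith
        _ = 2 := by norm_num
    have h5 : - ∫ ω in {ω | 0 < Z ω}ᶜ, f ω ∂ν ≤ 2 := by
      have := abs_le.1 (by simpa [Real.norm_eq_abs] using h4)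
      linarith [this.1]
    linarith [h1, h2, h3.le, h3.ge, h5]
  -- contradiction by choosing t large
  set t : ℝ := max 0 ((b^2/4 + Real.log (4 / (a*δ)))/a) with ht
  have ht0 : 0 ≤ t := le_max_left _ _
  have h6 := key t ht0
  have h7 : 4/(a*δ) ≤ rexp (a*t - b^2/4) := by
    rw [← Real.exp_log (show (0:ℝ) < 4/(a*δ) by positivity)]
    apply Real.exp_le_exp.2
    have : (b^2/4 + Real.log (4 / (a*δ)))/a ≤ t := le_max_right _ _
    rw [div_le_iff₀ ha0] at this
    linarith [this]
  have h8 : 4 ≤ a * rexp (a*t - b^2/4) * δ := by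
    rw [div_le_iff₀ (by positivity : (0:ℝ) < a*δ)] at h7
    nlinarith [h7]
  linarith


/-- **Constant conditional expectation forces a constant input.**
For the scalar Gaussian channel `Y = X + N` with `X` integrable and `N ~ N(0,1)`
independent of `X`, if `E[X | Y]` is almost surely equal to a constant, then `X`
is almost surely constant. -/
theorem constant_conditional_expectation_implies_constant
    {Ω : Type*} [MeasurableSpace Ω] (μ : Measure Ω) [IsProbabilityMeasure μ]
    (X N : Ω → ℝ) (hXmeas : Measurable X) (hNmeas : Measurable N)
    (hXint : Integrable X μ)
    (hN : Measure.map N μ = gaussianReal 0 1)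
    (hindep : IndepFun X N μ)
    (c : ℝ)
    (hconst : μ[X | MeasurableSpace.comap (fun ω => X ω + N ω) inferInstance]
        =ᵐ[μ] fun _ => c) :
    ∃ c' : ℝ, X =ᵐ[μ] fun _ => c' := by
  have hYmeas : Measurable (fun ω => X ω + N ω) := hXmeas.add hNmeas
  have hm : MeasurableSpace.comap (fun ω => X ω + N ω) inferInstance
      ≤ ‹MeasurableSpace Ω› := measurable_iff_comap_le.mp hYmeas
  -- Step A
  have stepA : ∀ y : ℝ, ∫ ω, (X ω - c) * rexp (-(y - (X ω + N ω))^2/2) ∂μ = 0 := by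
    intro y
    set g : Ω → ℝ := fun ω => rexp (-(y - (X ω + N ω))^2/2) with hg
    have hGmeas : Measurable (fun v : ℝ => rexp (-(y - v)^2/2)) :=
      Real.measurable_exp.comp
        ((((measurable_const.sub measurable_id).pow_const 2).neg).div_const 2)
    have hgm : StronglyMeasurable[MeasurableSpace.comap (fun ω => X ω + N ω) inferInstance] g := by
      have hYm : Measurable[MeasurableSpace.comap (fun ω => X ω + N ω) inferInstance]
          (fun ω => X ω + N ω) := measurable_iff_comap_le.mpr le_rfl
      exact (hGmeas.comp hYm).stronglyMeasurable
    have hgbdd : ∀ ω, ‖g ω‖ ≤ 1 := by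
      intro ω
      rw [Real.norm_eq_abs, abs_exp, Real.exp_le_one_iff]
      nlinarith [sq_nonneg (y - (X ω + N ω))]
    have hmul := condExp_stronglyMeasurable_mul_of_bound hm hgm hXint 1 (ae_of_all _ hgbdd)
    have hgasm : AEStronglyMeasurable g μ := ((hgm.mono hm).aestronglyMeasurable)
    have hgXint : Integrable (fun ω => g ω * X ω) μ := hXint.bdd_mul hgasm (ae_of_all _ hgbdd)
    have hgint : Integrable g μ :=
      Integrable.mono' (integrable_const 1) hgasm (ae_of_all _ hgbdd)
    have e1 : ∫ ω, g ω * X ω ∂μ = ∫ ω, g ω * c ∂μ := by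
      calc ∫ ω, g ω * X ω ∂μ
          = ∫ ω, (μ[g * X|MeasurableSpace.comap (fun ω => X ω + N ω) inferInstance]) ω ∂μ :=
            (integral_condExp hm (f := g * X)).symm
        _ = ∫ ω, (g ω * (μ[X|MeasurableSpace.comap (fun ω => X ω + N ω) inferInstance]) ω) ∂μ :=
            integral_congr_ae hmul
        _ = ∫ ω, g ω * c ∂μ := by
            refine integral_congr_ae ?_
            filter_upwards [hconst] with ω hω
            rw [hω]
    have e2 : ∫ ω, (X ω - c) * g ω ∂μ
        = (∫ ω, g ω * X ω ∂μ) - ∫ ω, g ω * c ∂μ := by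
      rw [← integral_sub hgXint (hgint.mul_const c)]
      exact integral_congr_ae (ae_of_all _ fun ω => by ring)
    have : ∫ ω, (X ω - c) * g ω ∂μ = 0 := by rw [e2, e1, sub_self]
    simpa [hg] using this
  -- joint law
  have hmapprod : μ.map (fun ω => (X ω, N ω)) = (μ.map X).prod (μ.map N) :=
    (indepFun_iff_map_prod_eq_prod_map_map hXmeas.aemeasurable hNmeas.aemeasurable).mp hindep
  haveI : IsProbabilityMeasure (μ.map X) := Measure.isProbabilityMeasure_map hXmeas.aemeasurable
  haveI : IsProbabilityMeasure (μ.map N) := Measure.isProbabilityMeasure_map hNmeas.aemeasurable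
  have hXc_int : Integrable (fun x : ℝ => x - c) (μ.map X) := by
    rw [integrable_map_measure (measurable_id'.sub_const c).aestronglyMeasurable
      hXmeas.aemeasurable]
    exact hXint.sub (integrable_const c)
  -- Step C
  have stepC : ∀ y : ℝ, ∫ x, (x - c) * rexp (-(y - x)^2/4) ∂(μ.map X) = 0 := by
    intro y
    set H : ℝ × ℝ → ℝ := fun p => (p.1 - c) * rexp (-(y - p.1 - p.2)^2/2) with hH
    have hHmeas : Measurable H := by
      refine (measurable_fst.sub_const c).mul ?_
      exact Real.measurable_exp.comp
        (((((measurable_const.sub measurable_fst).sub measurable_snd).pow_const 2).neg).div_const 2)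
    have hHb : ∀ p : ℝ × ℝ, ‖H p‖ ≤ |p.1 - c| := by
      intro p
      rw [hH]
      simp only [Real.norm_eq_abs, abs_mul, abs_exp]
      calc |p.1 - c| * rexp (-(y - p.1 - p.2)^2/2) ≤ |p.1 - c| * 1 := by
            refine mul_le_mul_of_nonneg_left ?_ (abs_nonneg _)
            rw [Real.exp_le_one_iff]
            nlinarith [sq_nonneg (y - p.1 - p.2)]
        _ = |p.1 - c| := mul_one _
    have hint_slice : ∀ x : ℝ, Integrable (fun n => H (x, n)) (μ.map N) := by
      intro x
      refine Integrable.mono' (integrable_const |x - c|)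
        (hHmeas.comp measurable_prodMk_left).aestronglyMeasurable (ae_of_all _ fun n => ?_)
      exact hHb (x, n)
    have hHint : Integrable H ((μ.map X).prod (μ.map N)) := by
      rw [integrable_prod_iff hHmeas.aestronglyMeasurable]
      refine ⟨ae_of_all _ hint_slice, ?_⟩
      refine Integrable.mono' hXc_int.abs
        (hHmeas.norm.aestronglyMeasurable.integral_prod_right') (ae_of_all _ fun x => ?_)
      rw [Real.norm_eq_abs, abs_of_nonneg (integral_nonneg fun n => norm_nonneg _)]
      calc ∫ n, ‖H (x, n)‖ ∂(μ.map N) ≤ ∫ _n, |x - c| ∂(μ.map N) := by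
            refine integral_mono (hint_slice x).norm (integrable_const _) fun n => hHb (x, n)
        _ = |x - c| := by simp
    have e2 : ∫ ω, H (X ω, N ω) ∂μ = 0 := by
      have hpt : ∀ ω, H (X ω, N ω) = (X ω - c) * rexp (-(y - (X ω + N ω))^2/2) := by
        intro ω; rw [hH]; simp only; rw [sub_sub]
      rw [integral_congr_ae (ae_of_all _ hpt)]
      exact stepA y
    have e3 : ∫ x, (∫ n, H (x, n) ∂(μ.map N)) ∂(μ.map X) = 0 := by
      rw [← MeasureTheory.integral_prod H hHint, ← hmapprod,
        integral_map (hXmeas.prodMk hNmeas).aemeasurable hHmeas.aestronglyMeasurable]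
      exact e2
    have e4 : ∀ x : ℝ, ∫ n, H (x, n) ∂(μ.map N)
        = ((x - c) * rexp (-(y - x)^2/4)) / Real.sqrt 2 := by
      intro x
      rw [hN, hH]
      simp only
      rw [integral_const_mul, aux_gauss_integral (y - x), mul_div_assoc]
    simp_rw [e4] at e3
    rw [integral_div] at e3
    exact (div_eq_zero_iff.mp e3).resolve_right (by positivity)
  -- master identity
  have master : ∀ t : ℝ, ∫ x, (x - c) * rexp ((x - c)*t - (x - c)^2/4) ∂(μ.map X) = 0 := by
    intro t
    have hC := stepC (c + 2*t)
    have hpt : ∀ x : ℝ, (x - c) * rexp (-(c + 2*t - x)^2/4)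
        = rexp (-(t^2)) * ((x - c) * rexp ((x - c)*t - (x - c)^2/4)) := by
      intro x
      rw [show -(c + 2*t - x)^2/4 = -(t^2) + ((x - c)*t - (x - c)^2/4) by ring, Real.exp_add]
      ring
    simp_rw [hpt] at hC
    rw [integral_const_mul] at hC
    exact (mul_eq_zero.mp hC).resolve_left (Real.exp_ne_zero _)
  -- apply the positivity lemma on both sides
  have hpos : (μ.map X) {x : ℝ | 0 < x - c} = 0 := by
    refine aux_pos (μ.map X) (fun x => x - c) (measurable_id.sub_const c) fun t => master t
  have hneg : (μ.map X) {x : ℝ | 0 < c - x} = 0 := by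
    refine aux_pos (μ.map X) (fun x => c - x) (measurable_const.sub measurable_id) fun t => ?_
    have hpt : ∀ x : ℝ, (c - x) * rexp ((c - x)*t - (c - x)^2/4)
        = -((x - c) * rexp ((x - c)*(-t) - (x - c)^2/4)) := by
      intro x
      rw [show (c - x)*t - (c - x)^2/4 = (x - c)*(-t) - (x - c)^2/4 by ring]
      ring
    simp_rw [hpt]
    rw [integral_neg, master (-t), neg_zero]
  refine ⟨c, ?_⟩
  have hne : (μ.map X) {x : ℝ | x ≠ c} = 0 := by
    refine measure_mono_null ?_ (measure_union_null hpos hneg)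
    intro x hx
    rcases lt_or_gt_of_ne hx with h | h
    · exact Or.inr (by simpa [Set.mem_setOf_eq] using sub_pos.2 h)
    · exact Or.inl (by simpa [Set.mem_setOf_eq] using sub_pos.2 h)
  have hae : ∀ᵐ x ∂(μ.map X), x = c := by
    rw [ae_iff]
    simpa using hne
  exact (ae_map_iff hXmeas.aemeasurable (by simp [Set.setOf_eq_eq_singleton]
    : MeasurableSet {x : ℝ | x = c})).mp hae
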